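/- arXiv:2008.10394 — 6 statements merged into one kernel-verified Lean document; each statement's English description precedes it below -/
import Mathlib

section
/- If K and K' are locally anti-blocking bodies in ℝⁿ, then K + K' is locally anti-blocking, and moreover (K + K') ∩ σℝ₊ⁿ = (K ∩ σℝ₊ⁿ) + (K' ∩ σℝ₊ⁿ) for every sign vector σ ∈ {−1,1}ⁿ. -/
open Set MeasureTheory Pointwise
open scoped RealInnerProductSpace

/-- A convex body `K ⊆ ℝ₊ⁿ` (compact, convex, containing `0`) is anti-blocking if
for all `y ∈ K` and `x ∈ ℝ₊ⁿ` with `x ≤ y` coordinatewise, `x ∈ K`. -/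
def IsAntiBlocking (n : ℕ) (K : Set (EuclideanSpace ℝ (Fin n))) : Prop :=
  IsCompact K ∧ Convex ℝ K ∧ (0 : EuclideanSpace ℝ (Fin n)) ∈ K ∧
    (∀ y ∈ K, ∀ i, (0:ℝ) ≤ y i) ∧
    ∀ y ∈ K, ∀ x : EuclideanSpace ℝ (Fin n),
      (∀ i, 0 ≤ x i) → (∀ i, x i ≤ y i) → x ∈ K

/-- Sign vector: each entry is `1` or `-1`. -/
def IsSignVector {n : ℕ} (σ : Fin n → ℝ) : Prop := ∀ i, σ i = 1 ∨ σ i = -1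

/-- The closed orthant `σℝ₊ⁿ = {x | σ i * x i ≥ 0 for all i}`. -/
def orthant {n : ℕ} (σ : Fin n → ℝ) : Set (EuclideanSpace ℝ (Fin n)) :=
  {x | ∀ i, 0 ≤ σ i * x i}

/-- Coordinatewise multiplication by the sign vector `σ`. -/
def sgnMul {n : ℕ} (σ : Fin n → ℝ) (x : EuclideanSpace ℝ (Fin n)) :
    EuclideanSpace ℝ (Fin n) :=
  WithLp.toLp 2 (fun i => σ i * x i)

/-- `K` is locally anti-blocking if `σ (K ∩ σℝ₊ⁿ)` is anti-blocking for every sign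
vector `σ ∈ {-1,1}ⁿ`. -/
def IsLocallyAntiBlocking (n : ℕ) (K : Set (EuclideanSpace ℝ (Fin n))) : Prop :=
  ∀ σ : Fin n → ℝ, IsSignVector σ →
    IsAntiBlocking n (sgnMul σ '' (K ∩ orthant σ))

lemma signVector_ne_zero {n : ℕ} {σ : Fin n → ℝ} (hσ : IsSignVector σ) (i : Fin n) :
    σ i ≠ 0 := by
  rcases hσ i with h | h <;> rw [h] <;> norm_num

/-- Key absorption lemma: if `K` is locally anti-blocking, `x ∈ K`, and `x'`
coordinatewise lies "between `0` and `x`" relative to the signs `σ` (or is `0`),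
then `x' ∈ K`. -/
lemma mem_of_locallyAntiBlocking {n : ℕ} {K : Set (EuclideanSpace ℝ (Fin n))}
    (hK : IsLocallyAntiBlocking n K) {σ : Fin n → ℝ} (hσ : IsSignVector σ)
    {x x' : EuclideanSpace ℝ (Fin n)} (hx : x ∈ K)
    (h : ∀ i, x' i = 0 ∨ (0 ≤ σ i * x' i ∧ σ i * x' i ≤ σ i * x i)) : x' ∈ K := by
  classical
  set τ : Fin n → ℝ := fun i => if 0 ≤ σ i * x i then σ i else -σ i with hτdef
  have hτ : IsSignVector τ := by
    intro i
    by_cases h2 : 0 ≤ σ i * x i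
    · simp only [hτdef]; rw [if_pos h2]; exact hσ i
    · simp only [hτdef]; rw [if_neg h2]
      rcases hσ i with h1 | h1 <;> rw [h1] <;> norm_num
  have hxτ : x ∈ orthant τ := by
    intro i
    by_cases h2 : 0 ≤ σ i * x i
    · simp only [hτdef, if_pos h2]; exact h2
    · simp only [hτdef, h2, if_false]
      nlinarith [le_of_not_ge h2]
  have hτx' : ∀ i, 0 ≤ τ i * x' i ∧ τ i * x' i ≤ τ i * x i := by
    intro i
    rcases h i with h0 | ⟨h1, h2⟩
    · constructor
      · simp [h0]
      · simpa [h0] using hxτ i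
    · have hpos : 0 ≤ σ i * x i := le_trans h1 h2
      simp only [hτdef, hpos, if_pos]
      exact ⟨h1, h2⟩
  obtain ⟨_, _, _, _, hdown⟩ := hK τ hτ
  have hmem : sgnMul τ x ∈ sgnMul τ '' (K ∩ orthant τ) :=
    Set.mem_image_of_mem _ ⟨hx, hxτ⟩
  have hmem' : sgnMul τ x' ∈ sgnMul τ '' (K ∩ orthant τ) := by
    refine hdown _ hmem (sgnMul τ x') (fun i => (hτx' i).1) (fun i => (hτx' i).2)
  obtain ⟨w, ⟨hwK, _⟩, hw⟩ := hmem'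
  have : w = x' := by
    ext i
    have : τ i * w i = τ i * x' i := congrArg (fun v => v i) hw
    exact mul_left_cancel₀ (signVector_ne_zero hτ i) this
  rwa [← this]

/-- The Minkowski sum of anti-blocking sets is anti-blocking. -/
lemma IsAntiBlocking.add {n : ℕ} {A B : Set (EuclideanSpace ℝ (Fin n))}
    (hA : IsAntiBlocking n A) (hB : IsAntiBlocking n B) : IsAntiBlocking n (A + B) := by
  obtain ⟨hAc, hAv, hA0, hAnn, hAd⟩ := hA
  obtain ⟨hBc, hBv, hB0, hBnn, hBd⟩ := hB
  refine ⟨hAc.add hBc, hAv.add hBv, ?_, ?_, ?_⟩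
  · exact ⟨0, hA0, 0, hB0, add_zero 0⟩
  · rintro z ⟨a, ha, b, hb, rfl⟩ i
    exact add_nonneg (hAnn a ha i) (hBnn b hb i)
  · rintro z ⟨a, ha, b, hb, rfl⟩ x hx0 hxz
    set a' : EuclideanSpace ℝ (Fin n) := WithLp.toLp 2 (fun i => min (x i) (a i)) with ha'def
    set b' : EuclideanSpace ℝ (Fin n) := WithLp.toLp 2 (fun i => x i - min (x i) (a i)) with hb'def
    have ha' : a' ∈ A := by
      refine hAd a ha a' (fun i => le_min (hx0 i) (hAnn a ha i)) (fun i => min_le_right _ _)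
    have hb' : b' ∈ B := by
      refine hBd b hb b' (fun i => ?_) (fun i => ?_)
      · simp only [hb'def, WithLp.ofLp_toLp, sub_nonneg]
        exact min_le_left _ _
      · simp only [hb'def, WithLp.ofLp_toLp]
        rcases le_total (x i) (a i) with h | h
        · rw [min_eq_left h]
          simpa using hBnn b hb i
        · rw [min_eq_right h]
          have hxz' : x i ≤ a i + b i := hxz i
          linarith
    refine ⟨a', ha', b', hb', ?_⟩
    ext i
    show a' i + b' i = x i
    simp [ha'def, hb'def]

lemma sum_inter_orthant {n : ℕ}
    {K K' : Set (EuclideanSpace ℝ (Fin n))}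
    (hK : IsLocallyAntiBlocking n K) (hK' : IsLocallyAntiBlocking n K')
    {σ : Fin n → ℝ} (hσ : IsSignVector σ) :
    (K + K') ∩ orthant σ = (K ∩ orthant σ) + (K' ∩ orthant σ) := by
  classical
  apply Set.Subset.antisymm
  · rintro z ⟨⟨x, hx, y, hy, rfl⟩, hzo⟩
    set z : EuclideanSpace ℝ (Fin n) := x + y with hzdef
    have hzi : ∀ i, z i = x i + y i := fun i => rfl
    set x' : EuclideanSpace ℝ (Fin n) :=
      WithLp.toLp 2 (fun i => if σ i * x i < 0 then 0 else if σ i * y i < 0 then z i else x i) with hx'def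
    set y' : EuclideanSpace ℝ (Fin n) := WithLp.toLp 2 (fun i => z i - x' i) with hy'def
    have hsum : x' + y' = z := by
      ext i
      show x' i + (z i - x' i) = z i
      ring
    have hzσ : ∀ i, 0 ≤ σ i * z i := hzo
    have hx'K : x' ∈ K := by
      refine mem_of_locallyAntiBlocking hK hσ hx (fun i => ?_)
      by_cases h1 : σ i * x i < 0
      · left; simp [hx'def, h1]
      · right
        push_neg at h1
        by_cases h2 : σ i * y i < 0
        · simp only [hx'def, WithLp.ofLp_toLp, not_lt.2 h1, if_neg (not_lt.2 h1), h2, if_pos, if_false]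
          constructor
          · exact hzσ i
          · have : σ i * z i = σ i * x i + σ i * y i := by rw [hzi i]; ring
            linarith
        · simp only [hx'def, WithLp.ofLp_toLp, if_neg (not_lt.2 h1), if_neg h2]
          exact ⟨h1, le_refl _⟩
    have hy'K : y' ∈ K' := by
      refine mem_of_locallyAntiBlocking hK' hσ hy (fun i => ?_)
      by_cases h1 : σ i * x i < 0
      · right
        have hy'i : y' i = z i := by simp [hy'def, hx'def, h1]
        rw [hy'i]
        constructor
        · exact hzσ i
        · have : σ i * z i = σ i * x i + σ i * y i := by rw [hzi i]; ring
          linarith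
      · by_cases h2 : σ i * y i < 0
        · left
          simp [hy'def, hx'def, h1, h2]
        · right
          have hy'i : y' i = y i := by
            simp only [hy'def, hx'def, WithLp.ofLp_toLp, if_neg h1, if_neg h2]
            rw [hzi i]; ring
          rw [hy'i]
          push_neg at h2
          exact ⟨h2, le_refl _⟩
    have hx'o : x' ∈ orthant σ := by
      intro i
      by_cases h1 : σ i * x i < 0
      · simp [hx'def, h1]
      · by_cases h2 : σ i * y i < 0
        · simpa [hx'def, h1, h2] using hzσ i
        · push_neg at h1
          simpa [hx'def, not_lt.2 h1, h2] using h1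
    have hy'o : y' ∈ orthant σ := by
      intro i
      by_cases h1 : σ i * x i < 0
      · simpa [hy'def, hx'def, h1] using hzσ i
      · by_cases h2 : σ i * y i < 0
        · simp [hy'def, hx'def, h1, h2]
        · push_neg at h2
          have hy'i : y' i = y i := by
            simp only [hy'def, hx'def, WithLp.ofLp_toLp, if_neg h1, if_neg (not_lt.2 h2)]
            rw [hzi i]; ring
          rw [hy'i]; exact h2
    exact ⟨x', ⟨hx'K, hx'o⟩, y', ⟨hy'K, hy'o⟩, hsum⟩
  · rintro z ⟨x, ⟨hxK, hxo⟩, y, ⟨hyK, hyo⟩, rfl⟩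
    refine ⟨⟨x, hxK, y, hyK, rfl⟩, fun i => ?_⟩
    have : σ i * (x + y) i = σ i * x i + σ i * y i := by
      show σ i * (x i + y i) = _; ring
    rw [this]
    exact add_nonneg (hxo i) (hyo i)

lemma sgnMul_image_add {n : ℕ} (σ : Fin n → ℝ)
    (A B : Set (EuclideanSpace ℝ (Fin n))) :
    sgnMul σ '' (A + B) = sgnMul σ '' A + sgnMul σ '' B := by
  have hadd : ∀ a b : EuclideanSpace ℝ (Fin n),
      sgnMul σ (a + b) = sgnMul σ a + sgnMul σ b := by
    intro a b
    ext i
    show σ i * (a i + b i) = σ i * a i + σ i * b i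
    ring
  ext w
  constructor
  · rintro ⟨v, ⟨a, ha, b, hb, rfl⟩, rfl⟩
    exact ⟨sgnMul σ a, Set.mem_image_of_mem _ ha, sgnMul σ b,
      Set.mem_image_of_mem _ hb, (hadd a b).symm⟩
  · rintro ⟨_, ⟨a, ha, rfl⟩, _, ⟨b, hb, rfl⟩, rfl⟩
    exact ⟨a + b, ⟨a, ha, b, hb, rfl⟩, hadd a b⟩

theorem locallyAntiBlocking_add {n : ℕ}
    {K K' : Set (EuclideanSpace ℝ (Fin n))}
    (hK : IsLocallyAntiBlocking n K) (hK' : IsLocallyAntiBlocking n K') :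
    IsLocallyAntiBlocking n (K + K') ∧
      ∀ σ : Fin n → ℝ, IsSignVector σ →
        (K + K') ∩ orthant σ = (K ∩ orthant σ) + (K' ∩ orthant σ) := by
  refine ⟨fun σ hσ => ?_, fun σ hσ => sum_inter_orthant hK hK' hσ⟩
  rw [sum_inter_orthant hK hK' hσ, sgnMul_image_add]
  exact (hK σ hσ).add (hK' σ hσ)
end

section
/- If K and K' are locally anti-blocking bodies in ℝⁿ, then the convex hull conv(K ∪ K') is locally anti-blocking, with conv(K ∪ K') ∩ σℝ₊ⁿ = conv((K ∩ σℝ₊ⁿ) ∪ (K' ∩ σℝ₊ⁿ)) for each sign vector σ. -/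
open Set MeasureTheory Pointwise
open scoped RealInnerProductSpace

namespace LABAux

variable {n : ℕ}

local notation "E" => EuclideanSpace ℝ (Fin n)

lemma sgnMul_apply (σ : Fin n → ℝ) (x : E) (i : Fin n) :
    sgnMul σ x i = σ i * x i := rfl

lemma sign_sq {σ : Fin n → ℝ} (hσ : IsSignVector σ) (i : Fin n) : σ i * σ i = 1 := by
  rcases hσ i with h | h <;> rw [h] <;> norm_num

lemma sign_ne_zero {σ : Fin n → ℝ} (hσ : IsSignVector σ) (i : Fin n) : σ i ≠ 0 := by
  rcases hσ i with h | h <;> rw [h] <;> norm_num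

lemma mem_of_sgnMul_mem {σ : Fin n → ℝ} (hσ : IsSignVector σ) {T : Set E} {z : E}
    (h : sgnMul σ z ∈ sgnMul σ '' T) : z ∈ T := by
  obtain ⟨u, hu, huz⟩ := h
  have huz' : u = z := by
    ext i
    have h1 : σ i * u i = σ i * z i := congrArg (fun v : E => v i) huz
    exact mul_left_cancel₀ (sign_ne_zero hσ i) h1
  rwa [← huz']

lemma mem_orthant {σ : Fin n → ℝ} {x : E} :
    x ∈ orthant σ ↔ ∀ i, 0 ≤ σ i * x i := Iff.rfl

/-- `K ∩ orthant σ` is "σ-downward closed". -/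
lemma downclosed {K : Set E} (hK : IsLocallyAntiBlocking n K)
    {σ : Fin n → ℝ} (hσ : IsSignVector σ) {a z : E} (ha : a ∈ K ∩ orthant σ)
    (hz0 : ∀ i, 0 ≤ σ i * z i) (hza : ∀ i, σ i * z i ≤ σ i * a i) :
    z ∈ K ∩ orthant σ := by
  obtain ⟨-, -, -, -, hdown⟩ := hK σ hσ
  have hmem : sgnMul σ z ∈ sgnMul σ '' (K ∩ orthant σ) :=
    hdown (sgnMul σ a) ⟨a, ha, rfl⟩ (sgnMul σ z) hz0 hza
  exact mem_of_sgnMul_mem hσ hmem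

lemma zero_mem {K : Set E} (hK : IsLocallyAntiBlocking n K) : (0 : E) ∈ K := by
  have hσ : IsSignVector (fun _ : Fin n => (1:ℝ)) := fun _ => Or.inl rfl
  obtain ⟨-, -, h0, -, -⟩ := hK _ hσ
  have hz : sgnMul (fun _ : Fin n => (1:ℝ)) (0 : E) = 0 := by
    ext i
    show (1:ℝ) * (0 : E) i = (0 : E) i
    simp
  have : sgnMul (fun _ : Fin n => (1:ℝ)) (0 : E) ∈
      sgnMul (fun _ : Fin n => (1:ℝ)) '' (K ∩ orthant (fun _ => (1:ℝ))) := by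
    rw [hz]; exact h0
  exact (mem_of_sgnMul_mem hσ this).1

/-- The σ-truncation of a vector: zero out the coordinates outside `orthant σ`. -/
noncomputable def truncate (σ : Fin n → ℝ) (x : E) : E :=
  WithLp.toLp 2 (fun i => if 0 ≤ σ i * x i then x i else 0)

lemma truncate_apply (σ : Fin n → ℝ) (x : E) (i : Fin n) :
    truncate σ x i = if 0 ≤ σ i * x i then x i else 0 := rfl

lemma truncate_mem {K : Set E} (hK : IsLocallyAntiBlocking n K)
    {σ : Fin n → ℝ} (hσ : IsSignVector σ) {x : E} (hx : x ∈ K) :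
    truncate σ x ∈ K ∩ orthant σ := by
  set σ' : Fin n → ℝ := fun i => if 0 ≤ σ i * x i then σ i else -σ i with hσ'def
  have hσ' : IsSignVector σ' := by
    intro i
    by_cases hc : 0 ≤ σ i * x i
    · simp only [σ', if_pos hc]
      exact hσ i
    · simp only [σ', if_neg hc]
      rcases hσ i with h | h
      · right; rw [h]
      · left; rw [h]; norm_num
  have hxK : x ∈ K ∩ orthant σ' := by
    refine ⟨hx, fun i => ?_⟩
    by_cases hc : 0 ≤ σ i * x i
    · simpa [σ', hc] using hc
    · push_neg at hc
      simp only [σ', if_neg (not_le.2 hc)]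
      nlinarith
  have hmem : truncate σ x ∈ K ∩ orthant σ' := by
    refine downclosed hK hσ' hxK (fun i => ?_) (fun i => ?_)
    · by_cases hc : 0 ≤ σ i * x i
      · simpa only [σ', truncate_apply, if_pos hc] using hc
      · simp [truncate_apply, if_neg hc]
    · by_cases hc : 0 ≤ σ i * x i
      · simp [truncate_apply, if_pos hc]
      · push_neg at hc
        simp only [truncate_apply, if_neg (not_le.2 hc), mul_zero, σ',
          if_neg (not_le.2 hc)]
        nlinarith
  refine ⟨hmem.1, fun i => ?_⟩
  by_cases hc : 0 ≤ σ i * x i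
  · simpa [truncate_apply, if_pos hc] using hc
  · simp [truncate_apply, if_neg hc]

lemma inter_convex {K : Set E} (hK : IsLocallyAntiBlocking n K)
    {σ : Fin n → ℝ} (hσ : IsSignVector σ) : Convex ℝ (K ∩ orthant σ) := by
  intro x hx y hy a b ha hb hab
  obtain ⟨-, hconv, -, -, -⟩ := hK σ hσ
  have h1 : sgnMul σ x ∈ sgnMul σ '' (K ∩ orthant σ) := ⟨x, hx, rfl⟩
  have h2 : sgnMul σ y ∈ sgnMul σ '' (K ∩ orthant σ) := ⟨y, hy, rfl⟩
  have h3 := hconv h1 h2 ha hb hab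
  have key : sgnMul σ (a • x + b • y) = a • sgnMul σ x + b • sgnMul σ y := by
    ext i
    show σ i * (a • x + b • y) i = (a • sgnMul σ x + b • sgnMul σ y) i
    simp only [PiLp.add_apply, PiLp.smul_apply, smul_eq_mul, sgnMul_apply]
    ring
  rw [← key] at h3
  exact mem_of_sgnMul_mem hσ h3

lemma trunc_coord_le {σ : Fin n → ℝ} (x : E) (i : Fin n) :
    σ i * x i ≤ σ i * truncate σ x i := by
  by_cases hc : 0 ≤ σ i * x i
  · simp [truncate_apply, if_pos hc]
  · push_neg at hc
    simp only [truncate_apply, if_neg (not_le.2 hc), mul_zero]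
    linarith

lemma lab_convex {K : Set E} (hK : IsLocallyAntiBlocking n K) : Convex ℝ K := by
  intro x hx y hy a b ha hb hab
  set z : E := a • x + b • y with hzdef
  set σ : Fin n → ℝ := fun i => if 0 ≤ z i then 1 else -1 with hσdef
  have hσ : IsSignVector σ := fun i => by
    by_cases hc : 0 ≤ z i <;> simp [σ, hc]
  have hzorth : ∀ i, 0 ≤ σ i * z i := by
    intro i
    by_cases hc : 0 ≤ z i
    · simpa [σ, hc] using hc
    · push_neg at hc
      simp only [σ, if_neg (not_le.2 hc)]
      nlinarith
  have hxt := truncate_mem hK hσ hx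
  have hyt := truncate_mem hK hσ hy
  have hw : a • truncate σ x + b • truncate σ y ∈ K ∩ orthant σ :=
    inter_convex hK hσ hxt hyt ha hb hab
  have hle : ∀ i, σ i * z i ≤ σ i * (a • truncate σ x + b • truncate σ y) i := by
    intro i
    have h1 := trunc_coord_le (σ := σ) x i
    have h2 := trunc_coord_le (σ := σ) y i
    have hz : z i = a * x i + b * y i := by
      simp [hzdef, PiLp.add_apply, PiLp.smul_apply, smul_eq_mul]
    have hw' : (a • truncate σ x + b • truncate σ y) i
        = a * truncate σ x i + b * truncate σ y i := by
      simp [PiLp.add_apply, PiLp.smul_apply, smul_eq_mul]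
    rw [hz, hw']
    nlinarith
  exact (downclosed hK hσ hw hzorth hle).1

/-- Splitting lemma: a point of the orthant dominated by a convex combination of
points of two σ-downward-closed sets lies in the convex hull of their union. -/
lemma split {σ : Fin n → ℝ} (hσ : IsSignVector σ) {A B : Set E}
    (hA : ∀ a ∈ A, ∀ z : E, (∀ i, 0 ≤ σ i * z i) → (∀ i, σ i * z i ≤ σ i * a i) → z ∈ A)
    (hB : ∀ b ∈ B, ∀ z : E, (∀ i, 0 ≤ σ i * z i) → (∀ i, σ i * z i ≤ σ i * b i) → z ∈ B)
    {a b z : E} (haA : a ∈ A) (hbB : b ∈ B)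
    (ha0 : ∀ i, 0 ≤ σ i * a i) (hb0 : ∀ i, 0 ≤ σ i * b i)
    {lam mu : ℝ} (hlam : 0 ≤ lam) (hmu : 0 ≤ mu) (hlm : lam + mu = 1)
    (hz0 : ∀ i, 0 ≤ σ i * z i)
    (hzle : ∀ i, σ i * z i ≤ lam * (σ i * a i) + mu * (σ i * b i)) :
    z ∈ convexHull ℝ (A ∪ B) := by
  rcases eq_or_lt_of_le hlam with h0 | hlam'
  · -- lam = 0
    have hmu1 : mu = 1 := by linarith
    have hzB : z ∈ B := by
      refine hB b hbB z hz0 (fun i => ?_)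
      have := hzle i
      rw [← h0, hmu1] at this
      linarith
    exact subset_convexHull ℝ _ (Or.inr hzB)
  rcases eq_or_lt_of_le hmu with h0 | hmu'
  · -- mu = 0
    have hlam1 : lam = 1 := by linarith
    have hzA : z ∈ A := by
      refine hA a haA z hz0 (fun i => ?_)
      have := hzle i
      rw [← h0, hlam1] at this
      linarith
    exact subset_convexHull ℝ _ (Or.inl hzA)
  -- 0 < lam, 0 < mu
  set m : Fin n → ℝ := fun i => min (lam * (σ i * a i)) (σ i * z i) with hm
  set a' : E := (WithLp.toLp 2 (fun i => σ i * (m i / lam)) : E) with ha'def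
  set b' : E := (WithLp.toLp 2 (fun i => σ i * ((σ i * z i - m i) / mu)) : E) with hb'def
  have hsq := sign_sq hσ
  have hm0 : ∀ i, 0 ≤ m i := fun i =>
    le_min (mul_nonneg hlam (ha0 i)) (hz0 i)
  have ha'c : ∀ i, σ i * a' i = m i / lam := by
    intro i
    show σ i * (σ i * (m i / lam)) = m i / lam
    rw [← mul_assoc, hsq i, one_mul]
  have hb'c : ∀ i, σ i * b' i = (σ i * z i - m i) / mu := by
    intro i
    show σ i * (σ i * ((σ i * z i - m i) / mu)) = (σ i * z i - m i) / mu
    rw [← mul_assoc, hsq i, one_mul]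
  have ha'A : a' ∈ A := by
    refine hA a haA a' (fun i => ?_) (fun i => ?_)
    · rw [ha'c i]; exact div_nonneg (hm0 i) hlam
    · rw [ha'c i, div_le_iff₀ hlam']
      calc m i ≤ lam * (σ i * a i) := min_le_left _ _
        _ = σ i * a i * lam := by ring
  have hb'B : b' ∈ B := by
    refine hB b hbB b' (fun i => ?_) (fun i => ?_)
    · rw [hb'c i]
      exact div_nonneg (sub_nonneg.2 (min_le_right _ _)) hmu
    · rw [hb'c i, div_le_iff₀ hmu']
      have h1 : σ i * z i - mu * (σ i * b i) ≤ m i := by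
        refine le_min ?_ ?_
        · have := hzle i; linarith
        · have := mul_nonneg hmu (hb0 i); linarith
      linarith [h1]
  have hzeq : z = lam • a' + mu • b' := by
    ext i
    have hcoord : (lam • a' + mu • b') i = lam * a' i + mu * b' i := by
      simp [PiLp.add_apply, PiLp.smul_apply, smul_eq_mul]
    rw [hcoord]
    have e1 : lam * a' i = σ i * m i := by
      show lam * (σ i * (m i / lam)) = σ i * m i
      field_simp
    have e2 : mu * b' i = σ i * (σ i * z i - m i) := by
      show mu * (σ i * ((σ i * z i - m i) / mu)) = σ i * (σ i * z i - m i)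
      field_simp
    rw [e1, e2]
    have : σ i * m i + σ i * (σ i * z i - m i) = (σ i * σ i) * z i := by ring
    rw [this, hsq i, one_mul]
  have hcomb := (convex_convexHull ℝ (A ∪ B))
    (subset_convexHull ℝ _ (Or.inl ha'A)) (subset_convexHull ℝ _ (Or.inr hb'B))
    hlam hmu hlm
  rwa [← hzeq] at hcomb

lemma convex_orthant (σ : Fin n → ℝ) : Convex ℝ (orthant σ) := by
  intro x hx y hy a b ha hb _
  intro i
  have h1 := hx i
  have h2 := hy i
  have : (a • x + b • y) i = a * x i + b * y i := by
    simp [PiLp.add_apply, PiLp.smul_apply, smul_eq_mul]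
  rw [this]
  nlinarith

lemma sgnMul_isLinear (σ : Fin n → ℝ) : IsLinearMap ℝ (sgnMul (n := n) σ) := by
  constructor
  · intro x y
    ext i
    show σ i * (x + y) i = (sgnMul σ x + sgnMul σ y) i
    simp only [PiLp.add_apply, sgnMul_apply]
    ring
  · intro c x
    ext i
    show σ i * (c • x) i = (c • sgnMul σ x) i
    simp only [PiLp.smul_apply, smul_eq_mul, sgnMul_apply]
    ring

lemma isCompact_convexJoin {S T : Set E} (hS : IsCompact S) (hT : IsCompact T) :
    IsCompact (convexJoin ℝ S T) := by
  have himg : convexJoin ℝ S T =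
      (fun p : ℝ × (E × E) => p.1 • p.2.1 + (1 - p.1) • p.2.2) ''
        (Set.Icc (0:ℝ) 1 ×ˢ S ×ˢ T) := by
    ext x
    simp only [mem_convexJoin, Set.mem_image, Set.mem_prod, Set.mem_Icc, Prod.exists]
    constructor
    · rintro ⟨a, haS, b, hbT, u, v, hu, hv, huv, rfl⟩
      refine ⟨u, a, b, ⟨⟨hu, by linarith⟩, haS, hbT⟩, ?_⟩
      have : (1:ℝ) - u = v := by linarith
      rw [this]
    · rintro ⟨t, a, b, ⟨⟨ht0, ht1⟩, haS, hbT⟩, rfl⟩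
      exact ⟨a, haS, b, hbT, t, 1 - t, ht0, by linarith, by ring, rfl⟩
  rw [himg]
  have hcont : Continuous (fun p : ℝ × (E × E) => p.1 • p.2.1 + (1 - p.1) • p.2.2) := by
    exact (continuous_fst.smul (continuous_snd.fst)).add
      ((continuous_const.sub continuous_fst).smul continuous_snd.snd)
  exact ((isCompact_Icc.prod (hS.prod hT)).image hcont)

end LABAux

theorem locallyAntiBlocking_convexHull_union {n : ℕ}
    {K K' : Set (EuclideanSpace ℝ (Fin n))}
    (hK : IsLocallyAntiBlocking n K) (hK' : IsLocallyAntiBlocking n K') :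
    IsLocallyAntiBlocking n (convexHull ℝ (K ∪ K')) ∧
      ∀ σ : Fin n → ℝ, IsSignVector σ →
        convexHull ℝ (K ∪ K') ∩ orthant σ =
          convexHull ℝ ((K ∩ orthant σ) ∪ (K' ∩ orthant σ)) := by
  classical
  have hKc : Convex ℝ K := LABAux.lab_convex hK
  have hK'c : Convex ℝ K' := LABAux.lab_convex hK'
  have hK0 : (0 : EuclideanSpace ℝ (Fin n)) ∈ K := LABAux.zero_mem hK
  have hK'0 : (0 : EuclideanSpace ℝ (Fin n)) ∈ K' := LABAux.zero_mem hK'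
  have hjoin : convexHull ℝ (K ∪ K') = convexJoin ℝ K K' :=
    hKc.convexHull_union hK'c ⟨0, hK0⟩ ⟨0, hK'0⟩
  have heq : ∀ σ : Fin n → ℝ, IsSignVector σ →
      convexHull ℝ (K ∪ K') ∩ orthant σ =
        convexHull ℝ ((K ∩ orthant σ) ∪ (K' ∩ orthant σ)) := by
    intro σ hσ
    apply Set.Subset.antisymm
    · rintro z ⟨hzhull, hzo⟩
      rw [hjoin, mem_convexJoin] at hzhull
      obtain ⟨x, hxK, y, hyK', lam, mu, hlam, hmu, hlm, hzeq⟩ := hzhull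
      have hxt := LABAux.truncate_mem hK hσ hxK
      have hyt := LABAux.truncate_mem hK' hσ hyK'
      refine LABAux.split hσ
        (fun a ha w h0 hle => LABAux.downclosed hK hσ ha h0 hle)
        (fun b hb w h0 hle => LABAux.downclosed hK' hσ hb h0 hle)
        hxt hyt hxt.2 hyt.2 hlam hmu hlm hzo (fun i => ?_)
      have hz : σ i * z i = lam * (σ i * x i) + mu * (σ i * y i) := by
        have : z i = lam * x i + mu * y i := by
          rw [← hzeq]
          simp [PiLp.add_apply, PiLp.smul_apply, smul_eq_mul]
        rw [this]; ring
      have h1 := LABAux.trunc_coord_le (σ := σ) x i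
      have h2 := LABAux.trunc_coord_le (σ := σ) y i
      rw [hz]
      nlinarith
    · refine convexHull_min ?_ ((convex_convexHull ℝ (K ∪ K')).inter
        (LABAux.convex_orthant σ))
      rintro p (⟨hp, hpo⟩ | ⟨hp, hpo⟩)
      · exact ⟨subset_convexHull ℝ _ (Or.inl hp), hpo⟩
      · exact ⟨subset_convexHull ℝ _ (Or.inr hp), hpo⟩
  refine ⟨?_, heq⟩
  intro σ hσ
  have himage : sgnMul σ '' (convexHull ℝ (K ∪ K') ∩ orthant σ)
      = convexHull ℝ (sgnMul σ '' (K ∩ orthant σ) ∪ sgnMul σ '' (K' ∩ orthant σ)) := by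
    rw [heq σ hσ, (LABAux.sgnMul_isLinear σ).image_convexHull, Set.image_union]
  rw [himage]
  obtain ⟨hS1, hS2, hS3, hS4, hS5⟩ := hK σ hσ
  obtain ⟨hT1, hT2, hT3, hT4, hT5⟩ := hK' σ hσ
  set S := sgnMul σ '' (K ∩ orthant σ) with hSdef
  set T := sgnMul σ '' (K' ∩ orthant σ) with hTdef
  have hST : convexHull ℝ (S ∪ T) = convexJoin ℝ S T :=
    hS2.convexHull_union hT2 ⟨0, hS3⟩ ⟨0, hT3⟩
  refine ⟨?_, convex_convexHull ℝ _, subset_convexHull ℝ _ (Or.inl hS3), ?_, ?_⟩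
  · rw [hST]
    exact LABAux.isCompact_convexJoin hS1 hT1
  · -- nonnegativity of coordinates on the hull
    intro y hy i
    have hsub : S ∪ T ⊆ {x : EuclideanSpace ℝ (Fin n) | ∀ j, 0 ≤ x j} := by
      rintro p (hp | hp)
      · exact hS4 p hp
      · exact hT4 p hp
    have hconv : Convex ℝ {x : EuclideanSpace ℝ (Fin n) | ∀ j, 0 ≤ x j} := by
      intro u hu v hv a b ha hb _
      intro j
      have : (a • u + b • v) j = a * u j + b * v j := by
        simp [PiLp.add_apply, PiLp.smul_apply, smul_eq_mul]
      rw [this]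
      exact add_nonneg (mul_nonneg ha (hu j)) (mul_nonneg hb (hv j))
    exact convexHull_min hsub hconv hy i
  · -- downward closedness of the hull
    intro y hy x hx0 hxy
    rw [hST, mem_convexJoin] at hy
    obtain ⟨a, haS, b, hbT, lam, mu, hlam, hmu, hlm, hyeq⟩ := hy
    have h1 : IsSignVector (fun _ : Fin n => (1:ℝ)) := fun _ => Or.inl rfl
    refine LABAux.split h1
      (fun p hp w h0 hle => hS5 p hp w (fun i => by simpa using h0 i)
        (fun i => by have := hle i; simpa using this))
      (fun p hp w h0 hle => hT5 p hp w (fun i => by simpa using h0 i)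
        (fun i => by have := hle i; simpa using this))
      haS hbT (fun i => by simpa using hS4 a haS i)
      (fun i => by simpa using hT4 b hbT i) hlam hmu hlm
      (fun i => by simpa using hx0 i) (fun i => ?_)
    have hyc : y i = lam * a i + mu * b i := by
      rw [← hyeq]
      simp [PiLp.add_apply, PiLp.smul_apply, smul_eq_mul]
    have := hxy i
    simp only [one_mul]
    rw [hyc] at this
    linarith
end

section
/- Let K ⊆ ℝⁿ be a locally anti-blocking body with 0 in its interior. Then the polar body K° is locally anti-blocking, and for each sign vector σ, K° ∩ σℝ₊ⁿ = σ·A(σ(K ∩ σℝ₊ⁿ)), where A denotes the anti-blocking dual. -/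
open Set MeasureTheory Pointwise
open scoped RealInnerProductSpace

/-- The polar body `K° = {y : ⟪x, y⟫ ≤ 1 for all x ∈ K}`. -/
def polarSet {n : ℕ} (K : Set (EuclideanSpace ℝ (Fin n))) :
    Set (EuclideanSpace ℝ (Fin n)) :=
  {y | ∀ x ∈ K, ⟪x, y⟫ ≤ 1}

/-- The anti-blocking dual `AL = {y ∈ ℝ₊ⁿ : ⟪y, x⟫ ≤ 1 for all x ∈ L}`. -/
def abDual {n : ℕ} (L : Set (EuclideanSpace ℝ (Fin n))) :
    Set (EuclideanSpace ℝ (Fin n)) :=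
  {y | (∀ i, (0:ℝ) ≤ y i) ∧ ∀ x ∈ L, ⟪y, x⟫ ≤ 1}

section Aux

variable {n : ℕ}

lemma euc_inner_eq (x y : EuclideanSpace ℝ (Fin n)) : ⟪x, y⟫ = ∑ i, x i * y i := by
  simp [PiLp.inner_apply, RCLike.inner_apply, map_mul]
  exact Finset.sum_congr rfl fun i _ => mul_comm _ _

lemma sgn_sq {σ : Fin n → ℝ} (hσ : IsSignVector σ) (i : Fin n) : σ i * σ i = 1 := by
  rcases hσ i with h | h <;> rw [h] <;> norm_num

lemma sgnMul_sgnMul {σ : Fin n → ℝ} (hσ : IsSignVector σ) (x : EuclideanSpace ℝ (Fin n)) :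
    sgnMul σ (sgnMul σ x) = x := by
  refine PiLp.ext fun i => ?_
  show σ i * (σ i * x i) = x i
  rw [← mul_assoc, sgn_sq hσ, one_mul]

lemma sgnMul_image_image {σ : Fin n → ℝ} (hσ : IsSignVector σ)
    (S : Set (EuclideanSpace ℝ (Fin n))) : sgnMul σ '' (sgnMul σ '' S) = S := by
  rw [← Set.image_comp]
  simp only [Function.comp]
  have : (fun x => sgnMul σ (sgnMul σ x)) = fun x : EuclideanSpace ℝ (Fin n) => x := by
    funext x; exact sgnMul_sgnMul hσ x
  rw [this, Set.image_id']

lemma inner_sgnMul_sgnMul {σ : Fin n → ℝ} (hσ : IsSignVector σ)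
    (x y : EuclideanSpace ℝ (Fin n)) : ⟪sgnMul σ x, sgnMul σ y⟫ = ⟪x, y⟫ := by
  rw [euc_inner_eq, euc_inner_eq]
  refine Finset.sum_congr rfl fun i _ => ?_
  show σ i * x i * (σ i * y i) = x i * y i
  have h : σ i * x i * (σ i * y i) = (σ i * σ i) * (x i * y i) := by ring
  rw [h, sgn_sq hσ, one_mul]

/-- The linear map given by `sgnMul σ`. -/
def sgnMulLM (σ : Fin n → ℝ) : EuclideanSpace ℝ (Fin n) →ₗ[ℝ] EuclideanSpace ℝ (Fin n) where
  toFun := sgnMul σ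
  map_add' x y := by refine PiLp.ext fun i => ?_; show σ i * (x i + y i) = σ i * x i + σ i * y i; ring
  map_smul' c x := by
    refine PiLp.ext fun i => ?_
    show σ i * (c * x i) = c * (σ i * x i)
    ring

lemma continuous_sgnMul (σ : Fin n → ℝ) : Continuous (sgnMul σ) :=
  (sgnMulLM σ).continuous_of_finiteDimensional

lemma isClosed_orthant (σ : Fin n → ℝ) : IsClosed (orthant σ) := by
  have : orthant σ = ⋂ i, {x : EuclideanSpace ℝ (Fin n) | 0 ≤ σ i * x i} := by
    ext x; simp [orthant, Set.mem_iInter]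
  rw [this]
  refine isClosed_iInter fun i => ?_
  have hc : Continuous fun x : EuclideanSpace ℝ (Fin n) => σ i * x i := by
    exact (continuous_const.mul ((continuous_apply i).comp
      (PiLp.continuous_ofLp (p := 2) (β := fun _ : Fin n => ℝ))))
  exact isClosed_le continuous_const hc

lemma isClosed_polarSet (K : Set (EuclideanSpace ℝ (Fin n))) : IsClosed (polarSet K) := by
  have : polarSet K = ⋂ x ∈ K, {y : EuclideanSpace ℝ (Fin n) | ⟪x, y⟫ ≤ 1} := by
    ext y; simp [polarSet]
  rw [this]
  refine isClosed_biInter fun x _ => ?_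
  exact isClosed_le (Continuous.inner continuous_const continuous_id) continuous_const

lemma isCompact_polarSet {K : Set (EuclideanSpace ℝ (Fin n))}
    (h0 : (0 : EuclideanSpace ℝ (Fin n)) ∈ interior K) : IsCompact (polarSet K) := by
  obtain ⟨ε, hε, hball⟩ := Metric.mem_nhds_iff.1 (mem_interior_iff_mem_nhds.1 h0)
  refine Metric.isCompact_of_isClosed_isBounded (isClosed_polarSet K) ?_
  refine (Metric.isBounded_iff_subset_closedBall 0).2 ⟨2 / ε, fun y hy => ?_⟩
  simp only [Metric.mem_closedBall, dist_zero_right]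
  rcases eq_or_ne y 0 with rfl | hy0
  · simp; positivity
  · have hny : (0:ℝ) < ‖y‖ := norm_pos_iff.2 hy0
    set x : EuclideanSpace ℝ (Fin n) := (ε / (2 * ‖y‖)) • y with hx
    have hxK : x ∈ K := by
      apply hball
      simp only [Metric.mem_ball, dist_zero_right, hx, norm_smul]
      rw [Real.norm_eq_abs, abs_of_pos (by positivity)]
      have heq : ε / (2 * ‖y‖) * ‖y‖ = ε / 2 := by field_simp
      rw [heq]; linarith
    have := hy x hxK
    rw [hx, real_inner_smul_left, real_inner_self_eq_norm_sq] at this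
    have h2 : ε / (2 * ‖y‖) * ‖y‖ ^ 2 = ε * ‖y‖ / 2 := by
      field_simp
    rw [h2] at this
    rw [le_div_iff₀ hε]
    nlinarith

/-- The key identity: `K° ∩ σℝ₊ⁿ = σ · A(σ(K ∩ σℝ₊ⁿ))`. -/
lemma polar_inter_orthant_eq {K : Set (EuclideanSpace ℝ (Fin n))}
    (hK : IsLocallyAntiBlocking n K) {σ : Fin n → ℝ} (hσ : IsSignVector σ) :
    polarSet K ∩ orthant σ = sgnMul σ '' abDual (sgnMul σ '' (K ∩ orthant σ)) := by
  ext y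
  constructor
  · rintro ⟨hy1, hy2⟩
    refine ⟨sgnMul σ y, ⟨fun i => hy2 i, ?_⟩, sgnMul_sgnMul hσ y⟩
    rintro w ⟨x, ⟨hxK, _⟩, rfl⟩
    rw [inner_sgnMul_sgnMul hσ, real_inner_comm]
    exact hy1 x hxK
  · rintro ⟨z, ⟨hz0, hz1⟩, rfl⟩
    constructor
    · -- y = sgnMul σ z ∈ polarSet K
      intro x hx
      -- truncation x' of x to the σ-orthant
      set x' : EuclideanSpace ℝ (Fin n) := WithLp.toLp 2 (fun i => if 0 ≤ σ i * x i then x i else 0) with hx'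
      set τ : Fin n → ℝ := fun i => if 0 ≤ σ i * x i then σ i else -σ i with hτdef
      have hτ : IsSignVector τ := by
        intro i
        rcases hσ i with h | h <;> simp only [hτdef] <;> split <;> rw [h] <;> norm_num
      have hxτ : x ∈ orthant τ := by
        intro i
        show 0 ≤ (if 0 ≤ σ i * x i then σ i else -σ i) * x i
        by_cases h : 0 ≤ σ i * x i
        · rw [if_pos h]; exact h
        · rw [if_neg h]
          push_neg at h
          nlinarith
      obtain ⟨_, _, _, _, hdown⟩ := hK τ hτ
      have hmem : sgnMul τ x ∈ sgnMul τ '' (K ∩ orthant τ) := ⟨x, ⟨hx, hxτ⟩, rfl⟩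
      have hmem' : sgnMul τ x' ∈ sgnMul τ '' (K ∩ orthant τ) := by
        refine hdown (sgnMul τ x) hmem (sgnMul τ x') (fun i => ?_) (fun i => ?_)
        · show 0 ≤ (if 0 ≤ σ i * x i then σ i else -σ i) * (if 0 ≤ σ i * x i then x i else 0)
          by_cases h : 0 ≤ σ i * x i
          · simp only [if_pos h]; exact h
          · simp only [if_neg h, mul_zero]; exact le_refl 0
        · show (if 0 ≤ σ i * x i then σ i else -σ i) * (if 0 ≤ σ i * x i then x i else 0)
            ≤ (if 0 ≤ σ i * x i then σ i else -σ i) * x i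
          by_cases h : 0 ≤ σ i * x i
          · simp only [if_pos h]; exact le_refl _
          · simp only [if_neg h, mul_zero]
            push_neg at h
            nlinarith
      obtain ⟨u, huK, huu⟩ := hmem'
      have hux : u = x' := by
        have := congrArg (sgnMul τ) huu
        rwa [sgnMul_sgnMul hτ, sgnMul_sgnMul hτ] at this
      rw [hux] at huK
      have hx'σ : x' ∈ orthant σ := by
        intro i
        show 0 ≤ σ i * (if 0 ≤ σ i * x i then x i else 0)
        by_cases h : 0 ≤ σ i * x i
        · rw [if_pos h]; exact h
        · rw [if_neg h, mul_zero]
      have hx'K : x' ∈ K := huK.1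
      have key : ⟪z, sgnMul σ x'⟫ ≤ 1 := hz1 (sgnMul σ x') ⟨x', ⟨hx'K, hx'σ⟩, rfl⟩
      -- compare ⟪x, sgnMul σ z⟫ with ⟪z, sgnMul σ x'⟫
      have hcomp : ⟪x, sgnMul σ z⟫ ≤ ⟪z, sgnMul σ x'⟫ := by
        rw [euc_inner_eq, euc_inner_eq]
        refine Finset.sum_le_sum fun i _ => ?_
        show x i * (σ i * z i) ≤ z i * (σ i * (if 0 ≤ σ i * x i then x i else 0))
        by_cases h : 0 ≤ σ i * x i
        · rw [if_pos h]; ring_nf; exact le_refl _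
        · rw [if_neg h, mul_zero, mul_zero]
          push_neg at h
          have hz0i := hz0 i
          nlinarith
      exact le_trans hcomp key
    · -- y = sgnMul σ z ∈ orthant σ
      intro i
      show 0 ≤ σ i * (σ i * z i)
      rw [← mul_assoc, sgn_sq hσ, one_mul]
      exact hz0 i

lemma abDual_isAntiBlocking {K : Set (EuclideanSpace ℝ (Fin n))}
    (hK : IsLocallyAntiBlocking n K)
    (h0 : (0 : EuclideanSpace ℝ (Fin n)) ∈ interior K)
    {σ : Fin n → ℝ} (hσ : IsSignVector σ) :
    IsAntiBlocking n (abDual (sgnMul σ '' (K ∩ orthant σ))) := by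
  set L := sgnMul σ '' (K ∩ orthant σ) with hL
  have habd : abDual L = sgnMul σ '' (polarSet K ∩ orthant σ) := by
    rw [polar_inter_orthant_eq hK hσ, sgnMul_image_image hσ]
  refine ⟨?_, ?_, ?_, ?_, ?_⟩
  · -- compact
    rw [habd]
    exact (((isCompact_polarSet h0).inter_right (isClosed_orthant σ)).image
      (continuous_sgnMul σ))
  · -- convex
    intro y₁ h₁ y₂ h₂ a b ha hb hab
    refine ⟨fun i => ?_, fun x hx => ?_⟩
    · show 0 ≤ a * y₁ i + b * y₂ i
      have := h₁.1 i; have := h₂.1 i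
      positivity
    · have e1 := h₁.2 x hx
      have e2 := h₂.2 x hx
      rw [show (a • y₁ + b • y₂ : EuclideanSpace ℝ (Fin n)) = a • y₁ + b • y₂ from rfl]
      rw [inner_add_left, real_inner_smul_left, real_inner_smul_left]
      nlinarith
  · -- 0 ∈
    exact ⟨fun i => le_refl 0, fun x _ => by rw [inner_zero_left]; norm_num⟩
  · -- nonneg
    exact fun y hy i => hy.1 i
  · -- down-closed
    intro y hy x hx0 hxy
    refine ⟨hx0, fun w hw => ?_⟩
    have hw0 : ∀ i, 0 ≤ w i := (hK σ hσ).2.2.2.1 w hw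
    have : ⟪x, w⟫ ≤ ⟪y, w⟫ := by
      rw [euc_inner_eq, euc_inner_eq]
      refine Finset.sum_le_sum fun i _ => ?_
      exact mul_le_mul_of_nonneg_right (hxy i) (hw0 i)
    exact le_trans this (hy.2 w hw)

end Aux

theorem polar_locallyAntiBlocking {n : ℕ}
    {K : Set (EuclideanSpace ℝ (Fin n))}
    (hK : IsLocallyAntiBlocking n K)
    (h0 : (0 : EuclideanSpace ℝ (Fin n)) ∈ interior K) :
    IsLocallyAntiBlocking n (polarSet K) ∧
      ∀ σ : Fin n → ℝ, IsSignVector σ →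
        polarSet K ∩ orthant σ =
          sgnMul σ '' abDual (sgnMul σ '' (K ∩ orthant σ)) := by
  constructor
  · intro σ hσ
    have : sgnMul σ '' (polarSet K ∩ orthant σ)
        = abDual (sgnMul σ '' (K ∩ orthant σ)) := by
      rw [polar_inter_orthant_eq hK hσ, sgnMul_image_image hσ]
    rw [this]
    exact abDual_isAntiBlocking hK h0 hσ
  · exact fun σ hσ => polar_inter_orthant_eq hK hσ
end

section
/- The only anti-blocking bodies in ℝ₊ⁿ that have a center of symmetry are axes-parallel boxes: for an anti-blocking body K, there exists x with K − x = x − K if and only if K = [0,a₁] × ⋯ × [0,aₙ] for some a₁,…,aₙ ≥ 0. -/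
open Set MeasureTheory Pointwise
open scoped RealInnerProductSpace

theorem antiBlocking_centrallySymmetric_iff_box {n : ℕ}
    {K : Set (EuclideanSpace ℝ (Fin n))} (hK : IsAntiBlocking n K) :
    (∃ x : EuclideanSpace ℝ (Fin n),
        (fun k => k - x) '' K = (fun k => x - k) '' K) ↔
      ∃ a : Fin n → ℝ, (∀ i, 0 ≤ a i) ∧
        K = {z : EuclideanSpace ℝ (Fin n) | ∀ i, 0 ≤ z i ∧ z i ≤ a i} := by
  obtain ⟨hcomp, hconv, h0, hnn, hdown⟩ := hK
  constructor
  · rintro ⟨x, hx⟩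
    -- key: for k ∈ K, 2x - k ∈ K
    have key : ∀ k ∈ K, (2 : ℝ) • x - k ∈ K := by
      intro k hk
      have : k - x ∈ (fun k => x - k) '' K := by
        rw [← hx]; exact ⟨k, hk, rfl⟩
      obtain ⟨k', hk', hk'eq⟩ := this
      have : k' = (2 : ℝ) • x - k := by
        have := hk'eq
        simp only at this
        have : x - k' = k - x := this
        linear_combination (norm := module) -this
      rwa [← this]
    have h2x : (2 : ℝ) • x ∈ K := by simpa using key 0 h0
    refine ⟨fun i => 2 * x i, fun i => by simpa using hnn _ h2x i, ?_⟩
    ext z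
    simp only [Set.mem_setOf_eq]
    constructor
    · intro hz i
      refine ⟨hnn _ hz i, ?_⟩
      have := hnn _ (key z hz) i
      simp only [PiLp.sub_apply, PiLp.smul_apply, smul_eq_mul] at this
      linarith
    · intro hz
      refine hdown _ h2x z (fun i => (hz i).1) (fun i => ?_)
      simpa using (hz i).2
  · rintro ⟨a, ha, rfl⟩
    refine ⟨(WithLp.equiv 2 _).symm (fun i => a i / 2), ?_⟩
    ext z
    constructor
    · rintro ⟨k, hk, rfl⟩
      refine ⟨(WithLp.equiv 2 _).symm (fun i => a i - k i), fun i => ?_, ?_⟩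
      · obtain ⟨h1, h2⟩ := hk i
        constructor <;> simp <;> linarith
      · ext i
        simp
        ring
    · rintro ⟨k, hk, rfl⟩
      refine ⟨(WithLp.equiv 2 _).symm (fun i => a i - k i), fun i => ?_, ?_⟩
      · obtain ⟨h1, h2⟩ := hk i
        constructor <;> simp <;> linarith
      · ext i
        simp
        ring
end

section
/- Let K ⊆ ℝ₊ⁿ be a full-dimensional anti-blocking body, and suppose that for every j-dimensional coordinate subspace E (for some fixed 1 ≤ j < n), K = conv((K ∩ E) ∪ (K ∩ E⊥)). Then K is a simplex, i.e., every extreme point of K is a nonnegative multiple of a standard basis vector. -/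
open Set MeasureTheory Pointwise
open scoped RealInnerProductSpace

/-- The coordinate subspace spanned by the standard basis vectors indexed by `S`. -/
def coordSubspace (n : ℕ) (S : Finset (Fin n)) : Set (EuclideanSpace ℝ (Fin n)) :=
  {x | ∀ i ∉ S, x i = 0}

/-- If a full-dimensional anti-blocking body satisfies
`K = conv((K ∩ E) ∪ (K ∩ E⊥))` for all `j`-dimensional coordinate subspaces `E`
(for some fixed `1 ≤ j < n`), then `K` is a simplex: every extreme point of `K`
is a nonnegative multiple of a standard basis vector. -/
theorem antiBlocking_decomposes_implies_simplex {n j : ℕ}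
    {K : Set (EuclideanSpace ℝ (Fin n))}
    (hK : IsAntiBlocking n K) (hfull : (interior K).Nonempty)
    (hj1 : 1 ≤ j) (hjn : j < n)
    (hdec : ∀ S : Finset (Fin n), S.card = j →
      K = convexHull ℝ ((K ∩ coordSubspace n S) ∪ (K ∩ coordSubspace n Sᶜ))) :
    ∀ p ∈ K.extremePoints ℝ, ∃ (i : Fin n) (μ : ℝ), 0 ≤ μ ∧
      p = μ • (EuclideanSpace.single i (1:ℝ)) := by
  intro p hp
  have hpK : p ∈ K := hp.1
  have hnpos : 0 < n := lt_of_le_of_lt (Nat.zero_le j) hjn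
  -- key claim: p cannot have two distinct nonzero coordinates
  have key : ∀ i k : Fin n, i ≠ k → p i ≠ 0 → p k ≠ 0 → False := by
    intro i k hik hpi hpk
    -- build S with |S| = j, i ∈ S, k ∉ S
    have hcard : j - 1 ≤ ((Finset.univ : Finset (Fin n)) \ {i, k}).card := by
      have h2 : ({i, k} : Finset (Fin n)).card ≤ 2 := Finset.card_insert_le _ _ |>.trans (by simp)
      have := Finset.card_sdiff_of_subset (Finset.subset_univ ({i, k} : Finset (Fin n)))
      rw [this]
      simp only [Finset.card_univ, Fintype.card_fin]
      omega
    obtain ⟨t, hts, htc⟩ := Finset.exists_subset_card_eq hcard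
    have hit : i ∉ t := fun h => by
      have := hts h; simp at this
    set S : Finset (Fin n) := insert i t with hS
    have hSc : S.card = j := by
      rw [Finset.card_insert_of_notMem hit, htc]; omega
    have hkS : k ∉ S := by
      simp only [hS, Finset.mem_insert]
      rintro (rfl | h)
      · exact hik rfl
      · have := hts h; simp at this
    have hiS : i ∈ S := Finset.mem_insert_self _ _
    have hp' : p ∈ ((K ∩ coordSubspace n S) ∪ (K ∩ coordSubspace n Sᶜ)) := by
      have := hdec S hSc
      have hp2 : p ∈ (convexHull ℝ ((K ∩ coordSubspace n S) ∪ (K ∩ coordSubspace n Sᶜ))).extremePoints ℝ := by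
        rwa [← this]
      exact extremePoints_convexHull_subset hp2
    rcases hp' with h | h
    · exact hpk (h.2 k hkS)
    · exact hpi (h.2 i (by simpa using hiS))
  by_cases hp0 : p = 0
  · refine ⟨⟨0, hnpos⟩, 0, le_refl _, by simp [hp0]⟩
  · have : ∃ i, p i ≠ 0 := by
      by_contra h
      push_neg at h
      exact hp0 (by ext k; exact h k)
    obtain ⟨i, hi⟩ := this
    refine ⟨i, p i, hK.2.2.2.1 p hpK i, ?_⟩
    ext k
    by_cases hk : k = i
    · subst hk
      simp [EuclideanSpace.single_apply]
    · have : p k = 0 := by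
        by_contra hpk
        exact key i k (Ne.symm hk) hi hpk
      simp [EuclideanSpace.single_apply, hk, this]
end

section
/- For any two anti-blocking bodies K, T ⊆ ℝ₊ⁿ, Vol(K + T) ≤ Vol(K − T). -/
open Set MeasureTheory Pointwise
open scoped RealInnerProductSpace ENNReal

namespace ABAux

/-- Compact, downward-closed subsets of the nonnegative orthant (possibly empty). -/
def Good (n : ℕ) (K : Set (Fin n → ℝ)) : Prop :=
  IsCompact K ∧ (∀ y ∈ K, ∀ i, (0:ℝ) ≤ y i) ∧
    ∀ y ∈ K, ∀ x : Fin n → ℝ, (∀ i, 0 ≤ x i) → (∀ i, x i ≤ y i) → x ∈ K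

/-- Product space version. -/
def Good2 (n : ℕ) (K : Set (ℝ × (Fin n → ℝ))) : Prop :=
  IsCompact K ∧ (∀ y ∈ K, 0 ≤ y.1 ∧ ∀ i, (0:ℝ) ≤ y.2 i) ∧
    ∀ y ∈ K, ∀ x : ℝ × (Fin n → ℝ), 0 ≤ x.1 → (∀ i, 0 ≤ x.2 i) →
      x.1 ≤ y.1 → (∀ i, x.2 i ≤ y.2 i) → x ∈ K

lemma image_add' {α β : Type*} [AddGroup α] [AddGroup β] (f : α → β)
    (hf : ∀ x y, f (x + y) = f x + f y) (A B : Set α) :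
    f '' (A + B) = f '' A + f '' B := by
  ext p
  constructor
  · rintro ⟨x, ⟨a, ha, b, hb, rfl⟩, rfl⟩
    exact ⟨f a, ⟨a, ha, rfl⟩, f b, ⟨b, hb, rfl⟩, (hf a b).symm⟩
  · rintro ⟨_, ⟨a, ha, rfl⟩, _, ⟨b, hb, rfl⟩, rfl⟩
    exact ⟨a + b, ⟨a, ha, b, hb, rfl⟩, hf a b⟩

lemma image_sub' {α β : Type*} [AddGroup α] [AddGroup β] (f : α → β)
    (hf : ∀ x y, f (x - y) = f x - f y) (A B : Set α) :
    f '' (A - B) = f '' A - f '' B := by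
  ext p
  constructor
  · rintro ⟨x, ⟨a, ha, b, hb, rfl⟩, rfl⟩
    exact ⟨f a, ⟨a, ha, rfl⟩, f b, ⟨b, hb, rfl⟩, (hf a b).symm⟩
  · rintro ⟨_, ⟨a, ha, rfl⟩, _, ⟨b, hb, rfl⟩, rfl⟩
    exact ⟨a - b, ⟨a, ha, b, hb, rfl⟩, hf a b⟩

lemma isCompact_sub' {α : Type*} [TopologicalSpace α] [AddGroup α] [IsTopologicalAddGroup α]
    {s t : Set α} (hs : IsCompact s) (ht : IsCompact t) : IsCompact (s - t) := by
  rw [sub_eq_add_neg]; exact hs.add ht.neg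

lemma isCompact_fiber {n : ℕ} {A : Set (ℝ × (Fin n → ℝ))} (hA : IsCompact A)
    (w : Fin n → ℝ) : IsCompact {s : ℝ | (s, w) ∈ A} := by
  have h : {s : ℝ | (s, w) ∈ A} = Prod.fst '' (A ∩ Prod.snd ⁻¹' {w}) := by
    ext s
    constructor
    · intro hs; exact ⟨(s, w), ⟨hs, rfl⟩, rfl⟩
    · rintro ⟨⟨a, b⟩, ⟨hab, hb⟩, rfl⟩
      simp only [mem_preimage, mem_singleton_iff] at hb
      subst hb; exact hab
  rw [h]
  exact (hA.inter_right (isClosed_singleton.preimage continuous_snd)).image continuous_fst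

lemma isCompact_slice {n : ℕ} {A : Set (ℝ × (Fin n → ℝ))} (hA : IsCompact A)
    (s : ℝ) : IsCompact {w : Fin n → ℝ | (s, w) ∈ A} := by
  have h : {w : Fin n → ℝ | (s, w) ∈ A} = Prod.snd '' (A ∩ Prod.fst ⁻¹' {s}) := by
    ext w
    constructor
    · intro hw; exact ⟨(s, w), ⟨hw, rfl⟩, rfl⟩
    · rintro ⟨⟨a, b⟩, ⟨hab, ha⟩, rfl⟩
      simp only [mem_preimage, mem_singleton_iff] at ha
      subst ha; exact hab
  rw [h]
  exact (hA.inter_right (isClosed_singleton.preimage continuous_fst)).image continuous_snd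

lemma down_eq_Icc {F : Set ℝ} (hc : IsCompact F) (hne : F.Nonempty)
    (hpos : ∀ s ∈ F, (0:ℝ) ≤ s)
    (hdown : ∀ s ∈ F, ∀ t : ℝ, 0 ≤ t → t ≤ s → t ∈ F) :
    F = Icc 0 (sSup F) := by
  have hmem := hc.sSup_mem hne
  ext t
  constructor
  · exact fun ht => ⟨hpos t ht, le_csSup hc.bddAbove ht⟩
  · rintro ⟨h0, h1⟩; exact hdown _ hmem t h0 h1

section Slices

variable {n : ℕ} {K T : Set (ℝ × (Fin n → ℝ))}

lemma good_slice (hK : Good2 n K) (s : ℝ) : Good n {u : Fin n → ℝ | (s, u) ∈ K} := by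
  obtain ⟨hKc, hKpos, hKdown⟩ := hK
  refine ⟨isCompact_slice hKc s, fun y hy i => (hKpos _ hy).2 i, ?_⟩
  intro y hy x hx hxy
  have hs : 0 ≤ s := (hKpos _ hy).1
  exact hKdown (s, y) hy (s, x) hs hx le_rfl hxy

/-- Slice of `K + T₀` at height `s` is `K_s + T̄`. -/
lemma slice_add_eq (hT : Good2 n T) (s : ℝ) :
    Prod.mk s ⁻¹' (K + (T ∩ Prod.fst ⁻¹' {0}))
      = {u : Fin n → ℝ | (s, u) ∈ K} + {v : Fin n → ℝ | ((0:ℝ), v) ∈ T} := by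
  ext u
  constructor
  · rintro ⟨p, hp, q, ⟨hqT, hq0⟩, hpq⟩
    have hq1 : q.1 = 0 := hq0
    have h1 : p.1 + q.1 = s := congrArg Prod.fst hpq
    have h2 : p.2 + q.2 = u := congrArg Prod.snd hpq
    have hp1 : p.1 = s := by rw [hq1, add_zero] at h1; exact h1
    refine ⟨p.2, ?_, q.2, ?_, h2⟩
    · show (s, p.2) ∈ K
      rw [← hp1]; exact hp
    · show ((0:ℝ), q.2) ∈ T
      rw [← hq1]; exact hqT
  · rintro ⟨x, hx, y, hy, rfl⟩
    exact ⟨(s, x), hx, (0, y), ⟨hy, rfl⟩, Prod.ext (add_zero s) rfl⟩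

lemma slice_sub_eq (hT : Good2 n T) (s : ℝ) :
    Prod.mk s ⁻¹' (K - (T ∩ Prod.fst ⁻¹' {0}))
      = {u : Fin n → ℝ | (s, u) ∈ K} - {v : Fin n → ℝ | ((0:ℝ), v) ∈ T} := by
  ext u
  constructor
  · rintro ⟨p, hp, q, ⟨hqT, hq0⟩, hpq⟩
    have hq1 : q.1 = 0 := hq0
    have h1 : p.1 - q.1 = s := congrArg Prod.fst hpq
    have h2 : p.2 - q.2 = u := congrArg Prod.snd hpq
    have hp1 : p.1 = s := by rw [hq1, sub_zero] at h1; exact h1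
    refine ⟨p.2, ?_, q.2, ?_, h2⟩
    · show (s, p.2) ∈ K
      rw [← hp1]; exact hp
    · show ((0:ℝ), q.2) ∈ T
      rw [← hq1]; exact hqT
  · rintro ⟨x, hx, y, hy, rfl⟩
    exact ⟨(s, x), hx, (0, y), ⟨hy, rfl⟩, Prod.ext (sub_zero s) rfl⟩

/-- Part (ii): `vol(K + T₀) ≤ vol(K − T₀)` using the induction hypothesis fiberwise. -/
lemma vol_add_base_le (ih : ∀ A B : Set (Fin n → ℝ), Good n A → Good n B →
      volume (A + B) ≤ volume (A - B))
    (hK : Good2 n K) (hT : Good2 n T) :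
    volume (K + (T ∩ Prod.fst ⁻¹' {0})) ≤ volume (K - (T ∩ Prod.fst ⁻¹' {0})) := by
  have hT0c : IsCompact (T ∩ Prod.fst ⁻¹' {0}) :=
    hT.1.inter_right (isClosed_singleton.preimage continuous_fst)
  have hm1 : MeasurableSet (K + (T ∩ Prod.fst ⁻¹' {0})) := (hK.1.add hT0c).measurableSet
  have hm2 : MeasurableSet (K - (T ∩ Prod.fst ⁻¹' {0})) := (isCompact_sub' hK.1 hT0c).measurableSet
  rw [Measure.volume_eq_prod, Measure.prod_apply hm1, Measure.prod_apply hm2]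
  refine lintegral_mono fun s => ?_
  rw [slice_add_eq hT s, slice_sub_eq hT s]
  have hTbar : Good n {v : Fin n → ℝ | ((0:ℝ), v) ∈ T} := good_slice hT 0
  exact ih _ _ (good_slice hK s) hTbar

end Slices


section Parts

variable {n : ℕ} {K T : Set (ℝ × (Fin n → ℝ))}

/-- Pointwise fiber bound for part (i). -/
lemma fiber_add_le (hK : Good2 n K) (hT : Good2 n T) (w : Fin n → ℝ) :
    volume {s : ℝ | (s, w) ∈ K + T}
      ≤ volume {s : ℝ | (s, w) ∈ K + (T ∩ Prod.fst ⁻¹' {0})}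
        + volume {s : ℝ | (s, w) ∈ T + (K ∩ Prod.fst ⁻¹' {0})} := by
  obtain ⟨hKc, hKpos, hKdown⟩ := hK
  obtain ⟨hTc, hTpos, hTdown⟩ := hT
  set K0 := K ∩ Prod.fst ⁻¹' {0} with hK0def
  set T0 := T ∩ Prod.fst ⁻¹' {0} with hT0def
  have hK0mem : ∀ p ∈ K, ((0:ℝ), p.2) ∈ K0 :=
    fun p hp => ⟨hKdown p hp (0, p.2) le_rfl (fun i => (hKpos p hp).2 i)
      (hKpos p hp).1 (fun i => le_rfl), rfl⟩
  have hT0mem : ∀ q ∈ T, ((0:ℝ), q.2) ∈ T0 :=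
    fun q hq => ⟨hTdown q hq (0, q.2) le_rfl (fun i => (hTpos q hq).2 i)
      (hTpos q hq).1 (fun i => le_rfl), rfl⟩
  have hK0c : IsCompact K0 := hKc.inter_right (isClosed_singleton.preimage continuous_fst)
  have hT0c : IsCompact T0 := hTc.inter_right (isClosed_singleton.preimage continuous_fst)
  by_cases hemp : {s : ℝ | (s, w) ∈ K + T} = ∅
  · rw [hemp]; simp
  obtain ⟨s0, hs0⟩ := nonempty_iff_ne_empty.2 hemp
  have hdec : ∀ s : ℝ, (s, w) ∈ K + T →
      s = s - 0 ∨ True := fun _ _ => Or.inr trivial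
  have hdec2 : ∀ s : ℝ, (s, w) ∈ K + T →
      ∃ s1 s2 : ℝ, s = s1 + s2 ∧ (s1, w) ∈ K + T0 ∧ (s2, w) ∈ T + K0 := by
    rintro s ⟨p, hp, q, hq, hpq⟩
    have h1 : p.1 + q.1 = s := congrArg Prod.fst hpq
    have h2 : p.2 + q.2 = w := congrArg Prod.snd hpq
    refine ⟨p.1, q.1, h1.symm, ⟨p, hp, (0, q.2), hT0mem q hq, Prod.ext (add_zero p.1) h2⟩,
      ⟨q, hq, (0, p.2), hK0mem p hp, Prod.ext (add_zero q.1) (by rw [add_comm] at h2; exact h2)⟩⟩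
  set F1 := {s : ℝ | (s, w) ∈ K + T0} with hF1def
  set F2 := {s : ℝ | (s, w) ∈ T + K0} with hF2def
  obtain ⟨s1, s2, _, h1, h2⟩ := hdec2 s0 hs0
  have hF1c : IsCompact F1 := isCompact_fiber (hKc.add hT0c) w
  have hF2c : IsCompact F2 := isCompact_fiber (hTc.add hK0c) w
  have hF1pos : ∀ s ∈ F1, (0:ℝ) ≤ s := by
    rintro s ⟨p, hp, q, hq, hpq⟩
    have h1 : p.1 + q.1 = s := congrArg Prod.fst hpq
    have := (hKpos p hp).1
    have := (hTpos q hq.1).1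
    linarith
  have hF2pos : ∀ s ∈ F2, (0:ℝ) ≤ s := by
    rintro s ⟨p, hp, q, hq, hpq⟩
    have h1 : p.1 + q.1 = s := congrArg Prod.fst hpq
    have := (hTpos p hp).1
    have := (hKpos q hq.1).1
    linarith
  have hF1down : ∀ s ∈ F1, ∀ t : ℝ, 0 ≤ t → t ≤ s → t ∈ F1 := by
    rintro s ⟨p, hp, q, hq, hpq⟩ t ht0 hts
    have h1 : p.1 + q.1 = s := congrArg Prod.fst hpq
    have h2 : p.2 + q.2 = w := congrArg Prod.snd hpq
    have hq1 : q.1 = 0 := hq.2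
    have hp1 : p.1 = s := by rw [hq1, add_zero] at h1; exact h1
    refine ⟨(t, p.2), hKdown p hp (t, p.2) ht0 (fun i => (hKpos p hp).2 i)
      (by rw [hp1]; exact hts) (fun i => le_rfl), q, hq, ?_⟩
    exact Prod.ext (by simp [hq1]) h2
  have hF2down : ∀ s ∈ F2, ∀ t : ℝ, 0 ≤ t → t ≤ s → t ∈ F2 := by
    rintro s ⟨p, hp, q, hq, hpq⟩ t ht0 hts
    have h1 : p.1 + q.1 = s := congrArg Prod.fst hpq
    have h2 : p.2 + q.2 = w := congrArg Prod.snd hpq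
    have hq1 : q.1 = 0 := hq.2
    have hp1 : p.1 = s := by rw [hq1, add_zero] at h1; exact h1
    refine ⟨(t, p.2), hTdown p hp (t, p.2) ht0 (fun i => (hTpos p hp).2 i)
      (by rw [hp1]; exact hts) (fun i => le_rfl), q, hq, ?_⟩
    exact Prod.ext (by simp [hq1]) h2
  have hF1eq := down_eq_Icc hF1c ⟨s1, h1⟩ hF1pos hF1down
  have hF2eq := down_eq_Icc hF2c ⟨s2, h2⟩ hF2pos hF2down
  have ha1 : (0:ℝ) ≤ sSup F1 :=
    le_csSup hF1c.bddAbove (hF1down s1 h1 0 le_rfl (hF1pos s1 h1))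
  have ha2 : (0:ℝ) ≤ sSup F2 :=
    le_csSup hF2c.bddAbove (hF2down s2 h2 0 le_rfl (hF2pos s2 h2))
  have hsubset : {s : ℝ | (s, w) ∈ K + T} ⊆ Icc 0 (sSup F1 + sSup F2) := by
    intro s hs
    obtain ⟨u1, u2, hu, hu1, hu2⟩ := hdec2 s hs
    have hb1 := le_csSup hF1c.bddAbove hu1
    have hb2 := le_csSup hF2c.bddAbove hu2
    have hp1 := hF1pos u1 hu1
    have hp2 := hF2pos u2 hu2
    exact ⟨by linarith, by linarith⟩
  calc volume {s : ℝ | (s, w) ∈ K + T} ≤ volume (Icc 0 (sSup F1 + sSup F2)) :=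
        measure_mono hsubset
    _ = ENNReal.ofReal (sSup F1 + sSup F2) := by rw [Real.volume_Icc, sub_zero]
    _ = ENNReal.ofReal (sSup F1) + ENNReal.ofReal (sSup F2) := ENNReal.ofReal_add ha1 ha2
    _ = volume F1 + volume F2 := by
        rw [hF1eq, hF2eq, Real.volume_Icc, Real.volume_Icc, sub_zero, sub_zero,
          csSup_Icc ha1, csSup_Icc ha2]

/-- Pointwise fiber bound for part (iii). -/
lemma fiber_sub_ge (hK : Good2 n K) (hT : Good2 n T) (w : Fin n → ℝ) :
    volume {s : ℝ | (s, w) ∈ K - (T ∩ Prod.fst ⁻¹' {0})}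
      + volume {t : ℝ | (t, -w) ∈ T - (K ∩ Prod.fst ⁻¹' {0})}
      ≤ volume {s : ℝ | (s, w) ∈ K - T} := by
  obtain ⟨hKc, hKpos, hKdown⟩ := hK
  obtain ⟨hTc, hTpos, hTdown⟩ := hT
  set K0 := K ∩ Prod.fst ⁻¹' {0} with hK0def
  set T0 := T ∩ Prod.fst ⁻¹' {0} with hT0def
  have hK0c : IsCompact K0 := hKc.inter_right (isClosed_singleton.preimage continuous_fst)
  set A1 := {s : ℝ | (s, w) ∈ K - T0} with hA1def
  set A2 := {t : ℝ | (t, -w) ∈ T - K0} with hA2def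
  have hA2c : IsCompact A2 := isCompact_fiber (isCompact_sub' hTc hK0c) _
  have h1 : A1 ⊆ {s : ℝ | (s, w) ∈ K - T} := by
    rintro s ⟨p, hp, q, hq, hpq⟩
    exact ⟨p, hp, q, hq.1, hpq⟩
  have h1pos : ∀ s ∈ A1, (0:ℝ) ≤ s := by
    rintro s ⟨p, hp, q, hq, hpq⟩
    have hfst : p.1 - q.1 = s := congrArg Prod.fst hpq
    have hq1 : q.1 = 0 := hq.2
    have := (hKpos p hp).1
    linarith
  have h2 : (-A2) \ {0} ⊆ {s : ℝ | (s, w) ∈ K - T} ∩ Iio 0 := by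
    rintro s ⟨hs, hs0⟩
    have hs' : -s ∈ A2 := hs
    obtain ⟨q, hq, p, hp, hpq⟩ := hs'
    have hfst : q.1 - p.1 = -s := congrArg Prod.fst hpq
    have hp1 : p.1 = 0 := hp.2
    have hq1 : 0 ≤ q.1 := (hTpos q hq).1
    have hsne : s ≠ 0 := by simpa using hs0
    constructor
    · refine ⟨p, hp.1, q, hq, ?_⟩
      have h := congrArg Neg.neg hpq
      rw [neg_sub] at h
      show p - q = (s, w)
      rw [h]
      simp [Prod.ext_iff]
    · have hsle : s ≤ 0 := by linarith
      exact lt_of_le_of_ne hsle hsne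
  have hdisj : Disjoint A1 ((-A2) \ {0}) := by
    refine Set.disjoint_left.2 fun s hs1 hs2 => ?_
    exact absurd (h1pos s hs1) (not_le.2 (h2 hs2).2)
  have hmeas2 : MeasurableSet ((-A2) \ {0}) :=
    hA2c.neg.measurableSet.diff (measurableSet_singleton 0)
  calc volume A1 + volume A2
      = volume A1 + volume ((-A2) \ {0}) := by
        rw [measure_diff_null (measure_singleton 0), Measure.measure_neg]
    _ = volume (A1 ∪ ((-A2) \ {0})) := (measure_union hdisj hmeas2).symm
    _ ≤ volume {s : ℝ | (s, w) ∈ K - T} :=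
        measure_mono (union_subset h1 (fun s hs => (h2 hs).1))

end Parts

section Step

variable {n : ℕ}

lemma step (ih : ∀ A B : Set (Fin n → ℝ), Good n A → Good n B →
      volume (A + B) ≤ volume (A - B))
    {K T : Set (ℝ × (Fin n → ℝ))} (hK : Good2 n K) (hT : Good2 n T) :
    volume (K + T) ≤ volume (K - T) := by
  set K0 := K ∩ Prod.fst ⁻¹' {0} with hK0def
  set T0 := T ∩ Prod.fst ⁻¹' {0} with hT0def
  have hK0c : IsCompact K0 := hK.1.inter_right (isClosed_singleton.preimage continuous_fst)
  have hT0c : IsCompact T0 := hT.1.inter_right (isClosed_singleton.preimage continuous_fst)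
  have hmKT : MeasurableSet (K + T) := (hK.1.add hT.1).measurableSet
  have hmKT0 : MeasurableSet (K + T0) := (hK.1.add hT0c).measurableSet
  have hmTK0 : MeasurableSet (T + K0) := (hT.1.add hK0c).measurableSet
  have hmKsT0 : MeasurableSet (K - T0) := (isCompact_sub' hK.1 hT0c).measurableSet
  have hmTsK0 : MeasurableSet (T - K0) := (isCompact_sub' hT.1 hK0c).measurableSet
  have hmKsT : MeasurableSet (K - T) := (isCompact_sub' hK.1 hT.1).measurableSet
  have parti : volume (K + T) ≤ volume (K + T0) + volume (T + K0) := by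
    rw [Measure.volume_eq_prod, Measure.prod_apply_symm hmKT, Measure.prod_apply_symm hmKT0,
      Measure.prod_apply_symm hmTK0,
      ← lintegral_add_left (measurable_measure_prodMk_right hmKT0)]
    exact lintegral_mono (fiber_add_le hK hT)
  have partii : volume (K + T0) ≤ volume (K - T0) := vol_add_base_le ih hK hT
  have partii' : volume (T + K0) ≤ volume (T - K0) := vol_add_base_le ih hT hK
  have partiii : volume (K - T0) + volume (T - K0) ≤ volume (K - T) := by
    rw [Measure.volume_eq_prod, Measure.prod_apply_symm hmKsT0, Measure.prod_apply_symm hmTsK0,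
      Measure.prod_apply_symm hmKsT]
    have hneg : ∫⁻ w, volume ((fun t => (t, w)) ⁻¹' (T - K0))
        = ∫⁻ w, volume ((fun t => (t, -w)) ⁻¹' (T - K0)) :=
      ((Measure.measurePreserving_neg (volume : Measure (Fin n → ℝ))).lintegral_comp
        (measurable_measure_prodMk_right hmTsK0)).symm
    rw [hneg, ← lintegral_add_left (measurable_measure_prodMk_right hmKsT0)]
    exact lintegral_mono (fiber_sub_ge hK hT)
  calc volume (K + T) ≤ volume (K + T0) + volume (T + K0) := parti
    _ ≤ volume (K - T0) + volume (T - K0) := add_le_add partii partii'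
    _ ≤ volume (K - T) := partiii

end Step

theorem main : ∀ n : ℕ, ∀ K T : Set (Fin n → ℝ), Good n K → Good n T →
    volume (K + T) ≤ volume (K - T) := by
  intro n
  induction n with
  | zero =>
    intro K T hK hT
    rcases K.eq_empty_or_nonempty with rfl | hKne
    · simp
    rcases T.eq_empty_or_nonempty with rfl | hTne
    · simp
    have huniv : K - T = univ := by
      obtain ⟨x, hx⟩ := hKne
      obtain ⟨y, hy⟩ := hTne
      refine eq_univ_of_forall fun z => ?_
      have hz : z = x - y := Subsingleton.elim _ _
      rw [hz]
      exact Set.sub_mem_sub hx hy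
    rw [huniv]
    exact measure_mono (subset_univ _)
  | succ n ih =>
    intro K T hK hT
    set e := MeasurableEquiv.piFinSuccAbove (fun _ : Fin (n+1) => ℝ) 0 with hedef
    set f : (Fin (n+1) → ℝ) → ℝ × (Fin n → ℝ) := fun x => (x 0, fun j => x j.succ) with hfdef
    have hfe : f = ⇑e := rfl
    have hf_add : ∀ x y, f (x + y) = f x + f y := fun x y => rfl
    have hf_sub : ∀ x y, f (x - y) = f x - f y := fun x y => rfl
    have hfc : Continuous f :=
      (continuous_apply 0).prodMk (continuous_pi fun j => continuous_apply j.succ)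
    have hvol : ∀ S : Set (Fin (n+1) → ℝ), MeasurableSet S → volume (f '' S) = volume S := by
      intro S hS
      have him : f '' S = e.symm ⁻¹' S := by
        rw [hfe]; exact Equiv.image_eq_preimage_symm _ _
      rw [him]
      exact ((volume_preserving_piFinSuccAbove (fun _ : Fin (n+1) => ℝ) 0).symm).measure_preimage
        hS.nullMeasurableSet
    have hGood : ∀ S : Set (Fin (n+1) → ℝ), Good (n+1) S → Good2 n (f '' S) := by
      rintro S ⟨hSc, hSpos, hSdown⟩
      refine ⟨hSc.image hfc, ?_, ?_⟩
      · rintro _ ⟨y, hy, rfl⟩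
        exact ⟨hSpos y hy 0, fun i => hSpos y hy i.succ⟩
      · rintro _ ⟨y, hy, rfl⟩ x hx1 hx2 hle1 hle2
        refine ⟨Fin.cons x.1 x.2, hSdown y hy _ ?_ ?_, ?_⟩
        · intro i
          refine Fin.cases ?_ ?_ i
          · simpa using hx1
          · intro j; simpa using hx2 j
        · intro i
          refine Fin.cases ?_ ?_ i
          · simpa using hle1
          · intro j; simpa using hle2 j
        · refine Prod.ext ?_ ?_
          · simp [hfdef]
          · funext j; simp [hfdef]
    calc volume (K + T) = volume (f '' (K + T)) := (hvol _ (hK.1.add hT.1).measurableSet).symm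
      _ = volume (f '' K + f '' T) := by rw [image_add' f hf_add]
      _ ≤ volume (f '' K - f '' T) := step ih (hGood K hK) (hGood T hT)
      _ = volume (f '' (K - T)) := by rw [image_sub' f hf_sub]
      _ = volume (K - T) := hvol _ (isCompact_sub' hK.1 hT.1).measurableSet

end ABAux

/-- For anti-blocking bodies `K, T ⊆ ℝ₊ⁿ`, `Vol(K + T) ≤ Vol(K - T)`. -/
theorem volume_add_le_volume_sub_antiBlocking {n : ℕ}
    {K T : Set (EuclideanSpace ℝ (Fin n))}
    (hK : IsAntiBlocking n K) (hT : IsAntiBlocking n T) :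
    volume (K + T) ≤ volume (K - T) := by
  set g : EuclideanSpace ℝ (Fin n) → (Fin n → ℝ) :=
    ⇑(MeasurableEquiv.toLp 2 (Fin n → ℝ)).symm with hgdef
  have hg_add : ∀ x y, g (x + y) = g x + g y := fun x y => rfl
  have hg_sub : ∀ x y, g (x - y) = g x - g y := fun x y => rfl
  have hgc : Continuous g := (PiLp.continuousLinearEquiv 2 ℝ (fun _ : Fin n => ℝ)).continuous
  have hvol : ∀ S : Set (EuclideanSpace ℝ (Fin n)), MeasurableSet S →
      volume (g '' S) = volume S := by
    intro S hS
    have him : g '' S = (MeasurableEquiv.toLp 2 (Fin n → ℝ)).symm.symm ⁻¹' S :=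
      Equiv.image_eq_preimage_symm _ _
    rw [him]
    exact ((EuclideanSpace.volume_preserving_symm_measurableEquiv_toLp (Fin n)).symm).measure_preimage
      hS.nullMeasurableSet
  have hGood : ∀ S : Set (EuclideanSpace ℝ (Fin n)), IsAntiBlocking n S → ABAux.Good n (g '' S) := by
    rintro S ⟨hSc, -, -, hSpos, hSdown⟩
    refine ⟨hSc.image hgc, ?_, ?_⟩
    · rintro _ ⟨y, hy, rfl⟩ i
      exact hSpos y hy i
    · rintro _ ⟨y, hy, rfl⟩ x hx hxy
      exact ⟨WithLp.toLp 2 x, hSdown y hy (WithLp.toLp 2 x) (fun i => hx i) (fun i => hxy i), rfl⟩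
  calc volume (K + T) = volume (g '' (K + T)) := (hvol _ (hK.1.add hT.1).measurableSet).symm
    _ = volume (g '' K + g '' T) := by rw [ABAux.image_add' g hg_add]
    _ ≤ volume (g '' K - g '' T) := ABAux.main n _ _ (hGood K hK) (hGood T hT)
    _ = volume (g '' (K - T)) := by rw [ABAux.image_sub' g hg_sub]
    _ = volume (K - T) := hvol _ (ABAux.isCompact_sub' hK.1 hT.1).measurableSet
end
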